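/- For each integer k, the function F_k(ρ) = ‖ρ^(k)‖₁ (the trace norm of the mode-k component of ρ) is a U(1)-asymmetry monotone: if there exists a U(1)-covariant channel mapping ρ to σ, then ‖σ^(k)‖₁ ≤ ‖ρ^(k)‖₁. -/

import Mathlib

open Complex Matrix MeasureTheory
open scoped ComplexOrder

/-- The unitary representation of U(1) on a finite-dimensional Hilbert space with
orthonormal basis indexed by `ι`, where basis vector `i` carries integer charge `c i`:
`U(θ) = Σ_n e^{inθ} Π_n`. -/
noncomputable def Urep {ι : Type*} [Fintype ι] [DecidableEq ι] (c : ι → ℤ) (θ : ℝ) :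
    Matrix ι ι ℂ :=
  Matrix.diagonal fun i => Complex.exp (Complex.I * (c i : ℂ) * (θ : ℂ))

/-- The mode-`k` component of an operator: `A^(k) = Σ_n Π_{n+k} A Π_n`. -/
def modeComp {ι : Type*} [Fintype ι] [DecidableEq ι] (c : ι → ℤ) (k : ℤ)
    (A : Matrix ι ι ℂ) : Matrix ι ι ℂ :=
  Matrix.of fun i j => if c i - c j = k then A i j else 0

/-- The square root of a positive semidefinite matrix (as in Mathlib of December 2024). -/
noncomputable def Matrix.PosSemidef.sqrt {n : Type*} [Fintype n] [DecidableEq n]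
    {A : Matrix n n ℂ} (hA : A.PosSemidef) : Matrix n n ℂ :=
  hA.1.eigenvectorUnitary.1 * diagonal ((↑) ∘ (√·) ∘ hA.1.eigenvalues) *
    (star hA.1.eigenvectorUnitary : Matrix n n ℂ)

/-- The trace norm `‖A‖₁ = tr √(A†A)`. -/
noncomputable def traceNorm {ι : Type*} [Fintype ι] [DecidableEq ι]
    (A : Matrix ι ι ℂ) : ℝ :=
  ((Matrix.posSemidef_conjTranspose_mul_self A).sqrt.trace).re

/-- The Choi matrix of a linear superoperator. -/
noncomputable def choi {ι κ : Type*} [Fintype ι] [DecidableEq ι] [Fintype κ]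
    (E : Matrix ι ι ℂ →ₗ[ℂ] Matrix κ κ ℂ) : Matrix (ι × κ) (ι × κ) ℂ :=
  Matrix.of fun p q => E (Matrix.single p.1 q.1 1) p.2 q.2

/-- A quantum channel: completely positive (positive semidefinite Choi matrix)
and trace preserving. -/
def IsCPTP {ι κ : Type*} [Fintype ι] [DecidableEq ι] [Fintype κ]
    (E : Matrix ι ι ℂ →ₗ[ℂ] Matrix κ κ ℂ) : Prop :=
  (choi E).PosSemidef ∧ ∀ A : Matrix ι ι ℂ, (E A).trace = A.trace

/-- U(1)-covariance of a superoperator with respect to input charges `c`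
and output charges `d`. -/
def IsCovariant {ι κ : Type*} [Fintype ι] [DecidableEq ι] [Fintype κ] [DecidableEq κ]
    (c : ι → ℤ) (d : κ → ℤ) (E : Matrix ι ι ℂ →ₗ[ℂ] Matrix κ κ ℂ) : Prop :=
  ∀ (θ : ℝ) (X : Matrix ι ι ℂ),
    E (Urep c θ * X * (Urep c θ)ᴴ) = Urep d θ * E X * (Urep d θ)ᴴ

/-- A density operator (quantum state). -/
def IsDensity {ι : Type*} [Fintype ι] (ρ : Matrix ι ι ℂ) : Prop :=
  ρ.PosSemidef ∧ ρ.trace = 1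

lemma herm_spec_aux {n : Type*} [Fintype n] [DecidableEq n] {A : Matrix n n ℂ}
    (hA : A.IsHermitian) :
    A = (hA.eigenvectorUnitary : Matrix n n ℂ) * diagonal (fun i => ((hA.eigenvalues i : ℝ) : ℂ))
      * star (hA.eigenvectorUnitary : Matrix n n ℂ) := by
  have h := hA.spectral_theorem
  rw [Unitary.conjStarAlgAut_apply] at h
  exact h

lemma Matrix.PosSemidef.sqrt_mul_self {n : Type*} [Fintype n] [DecidableEq n]
    {A : Matrix n n ℂ} (hA : A.PosSemidef) : hA.sqrt * hA.sqrt = A := by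
  have hu' : star (hA.1.eigenvectorUnitary : Matrix n n ℂ) * (hA.1.eigenvectorUnitary : Matrix n n ℂ) = 1 :=
    mem_unitaryGroup_iff'.mp hA.1.eigenvectorUnitary.2
  have hs : hA.sqrt = (hA.1.eigenvectorUnitary : Matrix n n ℂ)
      * diagonal (fun i => ((Real.sqrt (hA.1.eigenvalues i) : ℝ) : ℂ))
      * star (hA.1.eigenvectorUnitary : Matrix n n ℂ) := rfl
  rw [hs]
  conv_rhs => rw [herm_spec_aux hA.1]
  simp only [mul_assoc]
  rw [← mul_assoc (star _) _, hu', one_mul, ← mul_assoc (diagonal _), diagonal_mul_diagonal]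
  congr 3
  funext i
  rw [← Complex.ofReal_mul, Real.mul_self_sqrt (hA.eigenvalues_nonneg i)]

lemma Matrix.PosSemidef.posSemidef_sqrt {n : Type*} [Fintype n] [DecidableEq n]
    {A : Matrix n n ℂ} (hA : A.PosSemidef) : hA.sqrt.PosSemidef := by
  have hs : hA.sqrt = (hA.1.eigenvectorUnitary : Matrix n n ℂ)
      * diagonal (fun i => ((Real.sqrt (hA.1.eigenvalues i) : ℝ) : ℂ))
      * (hA.1.eigenvectorUnitary : Matrix n n ℂ)ᴴ := rfl
  rw [hs]
  have hD : (diagonal (fun i => ((Real.sqrt (hA.1.eigenvalues i) : ℝ) : ℂ))).PosSemidef :=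
    Matrix.posSemidef_diagonal_iff.mpr fun i => Complex.zero_le_real.mpr (Real.sqrt_nonneg _)
  exact hD.mul_mul_conjTranspose_same _

section helpers
variable {n m : Type*} [Fintype n] [DecidableEq n] [Fintype m]

/-- trace of psd matrix has nonneg real part -/
lemma psd_trace_re_nonneg {M : Matrix n n ℂ} (hM : M.PosSemidef) : 0 ≤ M.trace.re := by
  rw [Matrix.trace]
  have : ∀ i, 0 ≤ (M i i).re := by
    intro i
    have h := hM.re_dotProduct_nonneg (Pi.single i 1)
    simpa [dotProduct, Matrix.mulVec, Pi.single_apply, Finset.sum_ite_eq,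
      Finset.sum_ite_eq'] using h
  calc (0:ℝ) ≤ ∑ i, (M i i).re := Finset.sum_nonneg fun i _ => this i
    _ = (∑ i, Matrix.diag M i).re := by rw [Complex.re_sum]; rfl

lemma herm_trace_eq_re {M : Matrix n n ℂ} (hM : M.IsHermitian) :
    M.trace = (M.trace.re : ℂ) := by
  have h := Matrix.trace_conjTranspose M
  rw [hM.eq] at h
  exact (Complex.conj_eq_iff_re.mp (by simpa using h.symm)).symm

lemma psd_mul_psd_trace_re_nonneg {M N : Matrix n n ℂ} (hM : M.PosSemidef)
    (hN : N.PosSemidef) : 0 ≤ (M * N).trace.re := by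
  have h1 : N = hN.sqrt * hN.sqrt := hN.sqrt_mul_self.symm
  have h2 : (M * N).trace = (hN.sqrt * M * hN.sqrt).trace := by
    conv_lhs => rw [h1]
    rw [← mul_assoc, Matrix.trace_mul_cycle]
  rw [h2]
  refine psd_trace_re_nonneg ?_
  have := hM.mul_mul_conjTranspose_same hN.sqrt
  rwa [hN.posSemidef_sqrt.1.eq] at this

lemma trace_conjTranspose_mul (X Y : Matrix m n ℂ) :
    (Xᴴ * Y).trace = ∑ i, ∑ j, star (X i j) * Y i j := by
  rw [Matrix.trace]
  simp only [Matrix.diag, Matrix.mul_apply, Matrix.conjTranspose_apply]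
  rw [Finset.sum_comm]

end helpers

section polar
variable {n : Type*} [Fintype n] [DecidableEq n]

lemma conj_collapse {u : Matrix n n ℂ} (hu' : star u * u = 1) (v w : n → ℂ) :
    (u * diagonal v * star u) * (u * diagonal w * star u)
      = u * diagonal (fun i => v i * w i) * star u := by
  have h : diagonal v * (star u * (u * (diagonal w * star u)))
      = diagonal (fun i => v i * w i) * star u := by
    rw [← mul_assoc (star u) u, hu', one_mul, ← mul_assoc, diagonal_mul_diagonal]
  simp only [mul_assoc, h]

lemma conj_trace {u : Matrix n n ℂ} (hu' : star u * u = 1) (v : n → ℂ) :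
    (u * diagonal v * star u).trace = ∑ i, v i := by
  rw [Matrix.trace_mul_cycle, hu', one_mul, Matrix.trace_diagonal]

lemma conj_herm (u : Matrix n n ℂ) (v : n → ℝ) :
    (u * diagonal (fun i => (v i : ℂ)) * star u).IsHermitian := by
  have hd : (diagonal (fun i => ((v i : ℝ) : ℂ)))ᴴ = diagonal (fun i => ((v i : ℝ) : ℂ)) := by
    have h : (star fun i => ((v i : ℝ) : ℂ)) = fun i => ((v i : ℝ) : ℂ) :=
      funext fun i => Complex.conj_ofReal _
    rw [diagonal_conjTranspose, h]
  show _ᴴ = _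
  calc (u * diagonal (fun i => ((v i : ℝ) : ℂ)) * star u)ᴴ
      = (star u)ᴴ * ((diagonal fun i => ((v i : ℝ) : ℂ))ᴴ * uᴴ) := by
        rw [conjTranspose_mul, conjTranspose_mul]
    _ = u * diagonal (fun i => ((v i : ℝ) : ℂ)) * star u := by
        rw [hd, Matrix.star_eq_conjTranspose, conjTranspose_conjTranspose, mul_assoc]
end polar

section scalars
lemma sc_w1 {t : ℝ} (ht : 0 ≤ t) : (if t = 0 then 0 else (Real.sqrt t)⁻¹) * t = Real.sqrt t := by
  by_cases h : t = 0
  · simp [h]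
  · rw [if_neg h]
    have hsne : Real.sqrt t ≠ 0 := Real.sqrt_ne_zero'.mpr (lt_of_le_of_ne ht (Ne.symm h))
    rw [inv_mul_eq_iff_eq_mul₀ hsne]
    exact (Real.mul_self_sqrt ht).symm

lemma sc_w2 {t : ℝ} (ht : 0 ≤ t) :
    ((if t = 0 then 0 else (Real.sqrt t)⁻¹) * (if t = 0 then 0 else (Real.sqrt t)⁻¹)) * t
      * ((if t = 0 then 0 else (Real.sqrt t)⁻¹) * (if t = 0 then 0 else (Real.sqrt t)⁻¹))
      = (if t = 0 then 0 else (Real.sqrt t)⁻¹) * (if t = 0 then 0 else (Real.sqrt t)⁻¹) := by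
  by_cases h : t = 0
  · simp [h]
  · rw [if_neg h]
    have hsne : Real.sqrt t ≠ 0 := Real.sqrt_ne_zero'.mpr (lt_of_le_of_ne ht (Ne.symm h))
    have h1 : (Real.sqrt t)⁻¹ * (Real.sqrt t)⁻¹ = t⁻¹ := by
      rw [← mul_inv, Real.mul_self_sqrt ht]
    rw [h1]
    field_simp

lemma sc_p1 (t : ℝ) : Real.sqrt (Real.sqrt t) * Real.sqrt (Real.sqrt t) = Real.sqrt t :=
  Real.mul_self_sqrt (Real.sqrt_nonneg _)

lemma sc_qne {t : ℝ} (ht : 0 ≤ t) (h : t ≠ 0) : Real.sqrt (Real.sqrt t) ≠ 0 := by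
  have h1 : 0 < t := lt_of_le_of_ne ht (Ne.symm h)
  exact ne_of_gt (Real.sqrt_pos.mpr (Real.sqrt_pos.mpr h1))

lemma sc_p2 {t : ℝ} (ht : 0 ≤ t) :
    (if t = 0 then 0 else (Real.sqrt (Real.sqrt t))⁻¹) * t
      * (if t = 0 then 0 else (Real.sqrt (Real.sqrt t))⁻¹) = Real.sqrt t := by
  by_cases h : t = 0
  · simp [h]
  · rw [if_neg h]
    have hq := sc_qne ht h
    have h2 : (Real.sqrt (Real.sqrt t))⁻¹ * t * (Real.sqrt (Real.sqrt t))⁻¹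
        = t / (Real.sqrt (Real.sqrt t) * Real.sqrt (Real.sqrt t)) := by
      rw [div_eq_mul_inv, mul_inv]
      ring
    rw [h2, sc_p1]
    rw [div_eq_iff (Real.sqrt_ne_zero'.mpr (lt_of_le_of_ne ht (Ne.symm h)))]
    exact (Real.mul_self_sqrt ht).symm
end scalars

section polar2
variable {n : Type*} [Fintype n] [DecidableEq n]

lemma conj_collapse' {u : Matrix n n ℂ} (hu' : star u * u = 1) (v w : n → ℝ) :
    (u * diagonal (fun i => ((v i : ℝ) : ℂ)) * star u)
      * (u * diagonal (fun i => ((w i : ℝ) : ℂ)) * star u)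
      = u * diagonal (fun i => ((v i * w i : ℝ) : ℂ)) * star u := by
  rw [conj_collapse hu']
  congr 2
  funext i
  push_cast
  ring

lemma exists_dual_witness (M : Matrix n n ℂ) :
    ∃ W : Matrix n n ℂ,
      (Wᴴ * M).trace = (Matrix.posSemidef_conjTranspose_mul_self M).sqrt.trace ∧
      (1 - W * Wᴴ).PosSemidef := by
  have hH := Matrix.posSemidef_conjTranspose_mul_self M
  set u : Matrix n n ℂ := (hH.1.eigenvectorUnitary : Matrix n n ℂ) with hudef
  set lam := hH.1.eigenvalues with hlamdef
  have hu' : star u * u = 1 := mem_unitaryGroup_iff'.mp hH.1.eigenvectorUnitary.2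
  have spec : Mᴴ * M = u * diagonal (fun i => ((lam i : ℝ) : ℂ)) * star u :=
    herm_spec_aux hH.1
  have hlam : ∀ i, 0 ≤ lam i := hH.eigenvalues_nonneg
  have hsqrt : (Matrix.posSemidef_conjTranspose_mul_self M).sqrt
      = u * diagonal (fun i => ((Real.sqrt (lam i) : ℝ) : ℂ)) * star u := rfl
  set g : n → ℝ := fun i => if lam i = 0 then 0 else (Real.sqrt (lam i))⁻¹ with hgdef
  set R : Matrix n n ℂ := u * diagonal (fun i => ((g i : ℝ) : ℂ)) * star u with hRdef
  have hRh : Rᴴ = R := conj_herm u g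
  refine ⟨M * R, ?_, ?_⟩
  · have h1 : (M * R)ᴴ * M = R * (Mᴴ * M) := by
      rw [conjTranspose_mul, hRh, mul_assoc]
    have h2 : R * (Mᴴ * M) = u * diagonal (fun i => ((g i * lam i : ℝ) : ℂ)) * star u := by
      rw [spec, hRdef]; exact conj_collapse' hu' g lam
    rw [h1, h2, hsqrt, conj_trace hu', conj_trace hu']
    exact Finset.sum_congr rfl fun i _ => congrArg Complex.ofReal (sc_w1 (hlam i))
  · set T : Matrix n n ℂ := u * diagonal (fun i => ((g i * g i : ℝ) : ℂ)) * star u with hTdef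
    have hTh : Tᴴ = T := conj_herm u _
    have hRR : R * R = T := by rw [hRdef, hTdef]; exact conj_collapse' hu' g g
    have hS : (M * R) * (M * R)ᴴ = M * T * Mᴴ := by
      rw [conjTranspose_mul, hRh, ← hRR]
      simp only [mul_assoc]
    have hTMT : T * (Mᴴ * M) * T = T := by
      have e1 : T * (Mᴴ * M) * T
          = u * diagonal (fun i => (((g i * g i) * lam i * (g i * g i) : ℝ) : ℂ)) * star u := by
        rw [spec, hTdef]
        simp only [conj_collapse' hu']
      rw [e1, hTdef]
      exact congrArg (fun v => u * Matrix.diagonal v * star u)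
        (funext fun i => congrArg Complex.ofReal (sc_w2 (hlam i)))
    have hSS : (M * T * Mᴴ) * (M * T * Mᴴ) = M * T * Mᴴ := by
      conv_lhs => rw [show (M * T * Mᴴ) * (M * T * Mᴴ) = M * (T * (Mᴴ * M) * T) * Mᴴ by
        simp only [mul_assoc]]
      rw [hTMT]
    have hSh : (M * T * Mᴴ)ᴴ = M * T * Mᴴ := by
      rw [conjTranspose_mul, conjTranspose_mul, hTh, conjTranspose_conjTranspose]
      simp only [mul_assoc]
    rw [hS]
    have key : (1 - M * T * Mᴴ)ᴴ * (1 - M * T * Mᴴ) = 1 - M * T * Mᴴ := by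
      have h1 : (1 - M * T * Mᴴ)ᴴ = 1 - M * T * Mᴴ := by
        rw [conjTranspose_sub, conjTranspose_one, hSh]
      rw [h1, sub_mul, one_mul, mul_sub, mul_one, hSS]
      simp
    have hfin := Matrix.posSemidef_conjTranspose_mul_self (1 - M * T * Mᴴ)
    rwa [key] at hfin

lemma polar_factor (A : Matrix n n ℂ) :
    ∃ L Q : Matrix n n ℂ, A = L * Q ∧ Qᴴ = Q ∧
      Q * Q = (Matrix.posSemidef_conjTranspose_mul_self A).sqrt ∧
      Lᴴ * L = (Matrix.posSemidef_conjTranspose_mul_self A).sqrt := by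
  have hH := Matrix.posSemidef_conjTranspose_mul_self A
  set u : Matrix n n ℂ := (hH.1.eigenvectorUnitary : Matrix n n ℂ) with hudef
  set lam := hH.1.eigenvalues with hlamdef
  have hu : u * star u = 1 := mem_unitaryGroup_iff.mp hH.1.eigenvectorUnitary.2
  have hu' : star u * u = 1 := mem_unitaryGroup_iff'.mp hH.1.eigenvectorUnitary.2
  have spec : Aᴴ * A = u * diagonal (fun i => ((lam i : ℝ) : ℂ)) * star u :=
    herm_spec_aux hH.1
  have hlam : ∀ i, 0 ≤ lam i := hH.eigenvalues_nonneg
  have hsqrt : (Matrix.posSemidef_conjTranspose_mul_self A).sqrt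
      = u * diagonal (fun i => ((Real.sqrt (lam i) : ℝ) : ℂ)) * star u := rfl
  set s : n → ℝ := fun i => Real.sqrt (Real.sqrt (lam i)) with hsdef
  set g : n → ℝ := fun i => if lam i = 0 then 0 else (s i)⁻¹ with hgdef
  set e : n → ℝ := fun i => if lam i = 0 then 1 else 0 with hedef
  set Q : Matrix n n ℂ := u * diagonal (fun i => ((s i : ℝ) : ℂ)) * star u with hQdef
  set R : Matrix n n ℂ := u * diagonal (fun i => ((g i : ℝ) : ℂ)) * star u with hRdef
  set Ee : Matrix n n ℂ := u * diagonal (fun i => ((e i : ℝ) : ℂ)) * star u with hEedef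
  have hRh : Rᴴ = R := conj_herm u g
  have hEh : Eeᴴ = Ee := conj_herm u e
  refine ⟨A * R, Q, ?_, conj_herm u s, ?_, ?_⟩
  · -- A = (A * R) * Q
    have hN : A * Ee = 0 := by
      have h1 : (A * Ee)ᴴ * (A * Ee) = Ee * (Aᴴ * A) * Ee := by
        rw [conjTranspose_mul, hEh]
        simp only [mul_assoc]
      have h2 : Ee * (Aᴴ * A) * Ee
          = u * diagonal (fun i => ((e i * lam i * e i : ℝ) : ℂ)) * star u := by
        rw [spec, hEedef]
        simp only [conj_collapse' hu']
      have h3 : Ee * (Aᴴ * A) * Ee = 0 := by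
        rw [h2]
        have hz : (fun i => ((e i * lam i * e i : ℝ) : ℂ)) = fun _ => ((0 : ℝ) : ℂ) :=
          funext fun i => congrArg Complex.ofReal (by
            by_cases h : lam i = 0 <;> simp [hedef, h])
        rw [hz]
        simp
      rw [← h1] at h3
      exact Matrix.conjTranspose_mul_self_eq_zero.mp h3
    have hRQ : R * Q = u * diagonal (fun i => ((g i * s i : ℝ) : ℂ)) * star u := by
      rw [hRdef, hQdef]; exact conj_collapse' hu' g s
    have hgs : (fun i => ((g i * s i : ℝ) : ℂ)) = fun i => ((1 - e i : ℝ) : ℂ) :=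
      funext fun i => congrArg Complex.ofReal (by
        by_cases h : lam i = 0
        · simp [hgdef, hedef, h]
        · simp only [hgdef, hedef, if_neg h]
          rw [inv_mul_cancel₀ (sc_qne (hlam i) h)]
          norm_num)
    have hd : diagonal (fun i => ((1 - e i : ℝ) : ℂ))
        = 1 - diagonal (fun i => ((e i : ℝ) : ℂ)) := by
      ext i j
      by_cases hij : i = j
      · subst hij
        rw [Matrix.sub_apply, diagonal_apply_eq, diagonal_apply_eq, one_apply_eq]
        push_cast
        ring
      · simp [diagonal_apply_ne _ hij, one_apply_ne hij]
    have hRQ2 : R * Q = 1 - Ee := by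
      rw [hRQ, hgs, hd, mul_sub, sub_mul, mul_one, hu, hEedef]
    rw [mul_assoc, hRQ2, mul_sub, mul_one, hN, sub_zero]
  · -- Q * Q = sqrt
    have h1 : Q * Q = u * diagonal (fun i => ((s i * s i : ℝ) : ℂ)) * star u := by
      rw [hQdef]; exact conj_collapse' hu' s s
    rw [h1, hsqrt]
    exact congrArg (fun v => u * Matrix.diagonal v * star u)
      (funext fun i => congrArg Complex.ofReal (sc_p1 (lam i)))
  · -- Lᴴ L = sqrt
    have h1 : (A * R)ᴴ * (A * R) = R * (Aᴴ * A) * R := by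
      rw [conjTranspose_mul, hRh]
      simp only [mul_assoc]
    have h2 : R * (Aᴴ * A) * R
        = u * diagonal (fun i => ((g i * lam i * g i : ℝ) : ℂ)) * star u := by
      rw [spec, hRdef]
      simp only [conj_collapse' hu']
    rw [h1, h2, hsqrt]
    exact congrArg (fun v => u * Matrix.diagonal v * star u)
      (funext fun i => congrArg Complex.ofReal (sc_p2 (hlam i)))
end polar2
section kraus
variable {ι κ : Type*} [Fintype ι] [DecidableEq ι] [Fintype κ] [DecidableEq κ]
variable (E : Matrix ι ι ℂ →ₗ[ℂ] Matrix κ κ ℂ)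

lemma choi_entry (X : Matrix ι ι ℂ) (p q : κ) :
    E X p q = ∑ a, ∑ b, X a b * choi E (a, p) (b, q) := by
  conv_lhs => rw [Matrix.matrix_eq_sum_single X, map_sum]
  rw [Matrix.sum_apply]
  refine Finset.sum_congr rfl fun a _ => ?_
  rw [map_sum, Matrix.sum_apply]
  refine Finset.sum_congr rfl fun b _ => ?_
  have h1 : X a b • Matrix.single a b (1 : ℂ) = Matrix.single a b (X a b) := by
    rw [Matrix.smul_single, smul_eq_mul, mul_one]
  rw [← h1, _root_.map_smul, Matrix.smul_apply, smul_eq_mul]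
  rfl

/-- Kraus operators extracted from the square root of the Choi matrix. -/
noncomputable def krausOp (hC : (choi E).PosSemidef) (r : ι × κ) : Matrix κ ι ℂ :=
  Matrix.of fun p a => star (hC.sqrt r (a, p))

lemma choi_entry_sqrt (hC : (choi E).PosSemidef) (x y : ι × κ) :
    choi E x y = ∑ r, star (hC.sqrt r x) * hC.sqrt r y := by
  have h : choi E = hC.sqrtᴴ * hC.sqrt := by
    rw [hC.posSemidef_sqrt.1.eq, hC.sqrt_mul_self]
  conv_lhs => rw [h]
  rw [Matrix.mul_apply]
  simp [Matrix.conjTranspose_apply]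

lemma kraus_apply (hC : (choi E).PosSemidef) (X : Matrix ι ι ℂ) :
    E X = ∑ r, krausOp E hC r * X * (krausOp E hC r)ᴴ := by
  ext p q
  have hR : ∀ r : ι × κ, (krausOp E hC r * X * (krausOp E hC r)ᴴ) p q
      = ∑ a, ∑ b, X a b * (star (hC.sqrt r (a, p)) * hC.sqrt r (b, q)) := by
    intro r
    calc (krausOp E hC r * X * (krausOp E hC r)ᴴ) p q
        = ∑ b, (∑ a, krausOp E hC r p a * X a b) * (krausOp E hC r)ᴴ b q := by
          simp only [Matrix.mul_apply]
      _ = ∑ b, ∑ a, krausOp E hC r p a * X a b * (krausOp E hC r)ᴴ b q := by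
          refine Finset.sum_congr rfl fun b _ => ?_
          rw [Finset.sum_mul]
      _ = ∑ a, ∑ b, X a b * (star (hC.sqrt r (a, p)) * hC.sqrt r (b, q)) := by
          rw [Finset.sum_comm]
          refine Finset.sum_congr rfl fun a _ => Finset.sum_congr rfl fun b _ => ?_
          show star (hC.sqrt r (a, p)) * X a b * star (star (hC.sqrt r (b, q)))
              = X a b * (star (hC.sqrt r (a, p)) * hC.sqrt r (b, q))
          rw [star_star]
          ring
  rw [Matrix.sum_apply, choi_entry E X p q]
  calc ∑ a, ∑ b, X a b * choi E (a, p) (b, q)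
      = ∑ a, ∑ b, ∑ r, X a b * (star (hC.sqrt r (a, p)) * hC.sqrt r (b, q)) := by
        refine Finset.sum_congr rfl fun a _ => Finset.sum_congr rfl fun b _ => ?_
        rw [choi_entry_sqrt E hC, Finset.mul_sum]
    _ = ∑ a, ∑ r, ∑ b, X a b * (star (hC.sqrt r (a, p)) * hC.sqrt r (b, q)) := by
        refine Finset.sum_congr rfl fun a _ => ?_
        rw [Finset.sum_comm]
    _ = ∑ r, ∑ a, ∑ b, X a b * (star (hC.sqrt r (a, p)) * hC.sqrt r (b, q)) := by
        rw [Finset.sum_comm]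
    _ = ∑ r, (krausOp E hC r * X * (krausOp E hC r)ᴴ) p q := by
        exact Finset.sum_congr rfl fun r _ => (hR r).symm

lemma trace_stdBasisMatrix' (a b : ι) :
    (Matrix.single a b (1 : ℂ)).trace = if a = b then 1 else 0 := by
  simp only [Matrix.trace, Matrix.diag, Matrix.single, Matrix.of_apply]
  by_cases h : a = b
  · subst h
    simp
  · rw [if_neg h]
    refine Finset.sum_eq_zero fun i _ => ?_
    rw [if_neg]
    rintro ⟨rfl, rfl⟩
    exact h rfl

lemma kraus_tp (hC : (choi E).PosSemidef) (hTP : ∀ A : Matrix ι ι ℂ, (E A).trace = A.trace) :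
    ∑ r : ι × κ, (krausOp E hC r)ᴴ * krausOp E hC r = 1 := by
  ext a b
  rw [Matrix.sum_apply]
  have h1 : ∀ r : ι × κ, ((krausOp E hC r)ᴴ * krausOp E hC r) a b
      = ∑ p, hC.sqrt r (a, p) * star (hC.sqrt r (b, p)) := by
    intro r
    rw [Matrix.mul_apply]
    refine Finset.sum_congr rfl fun p _ => ?_
    show star (krausOp E hC r p a) * krausOp E hC r p b = _
    show star (star (hC.sqrt r (a, p))) * star (hC.sqrt r (b, p)) = _
    rw [star_star]
  have h2 : ∑ r : ι × κ, ∑ p, hC.sqrt r (a, p) * star (hC.sqrt r (b, p))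
      = ∑ p, star (choi E (a, p) (b, p)) := by
    rw [Finset.sum_comm]
    refine Finset.sum_congr rfl fun p _ => ?_
    rw [choi_entry_sqrt E hC, star_sum]
    refine Finset.sum_congr rfl fun r _ => ?_
    rw [StarMul.star_mul, star_star]
    ring
  have h3 : ∑ p, choi E (a, p) (b, p) = if a = b then 1 else 0 := by
    have ht : ∑ p, choi E (a, p) (b, p) = (E (Matrix.single a b 1)).trace := rfl
    rw [ht, hTP, trace_stdBasisMatrix']
  rw [Finset.sum_congr rfl fun r _ => h1 r, h2, ← star_sum, h3]
  rw [Matrix.one_apply]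
  by_cases h : a = b <;> simp [h]

lemma kraus_psd (hC : (choi E).PosSemidef) {X : Matrix ι ι ℂ} (hX : X.PosSemidef) :
    (E X).PosSemidef := by
  rw [kraus_apply E hC X]
  refine Finset.sum_induction _ _ (fun x y hx hy => hx.add hy) Matrix.PosSemidef.zero
    fun r _ => ?_
  exact hX.mul_mul_conjTranspose_same (krausOp E hC r)

end kraus

section contraction
variable {ι κ : Type*} [Fintype ι] [DecidableEq ι] [Fintype κ] [DecidableEq κ]

lemma traceNorm_nonneg (A : Matrix ι ι ℂ) : 0 ≤ traceNorm A :=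
  psd_trace_re_nonneg (Matrix.posSemidef_conjTranspose_mul_self A).posSemidef_sqrt

/-- trace of a Frobenius-type pairing as an inner product sum -/
lemma star_mul_self_eq_norm_sq (z : ℂ) : star z * z = ((‖z‖ ^ 2 : ℝ) : ℂ) := by
  rw [Complex.star_def, ← Complex.normSq_eq_conj_mul_self]
  rw [Complex.normSq_eq_norm_sq]

lemma trace_eq_ofReal_sum (X : Matrix ι κ ℂ) :
    (Xᴴ * X).trace = ((∑ i, ∑ j, ‖X i j‖ ^ 2 : ℝ) : ℂ) := by
  rw [trace_conjTranspose_mul]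
  push_cast
  exact Finset.sum_congr rfl fun i _ => Finset.sum_congr rfl fun j _ =>
    by rw [star_mul_self_eq_norm_sq]; push_cast; ring

/-- Monotonicity of the trace norm under CPTP maps. -/
theorem traceNorm_CPTP_le (E : Matrix ι ι ℂ →ₗ[ℂ] Matrix κ κ ℂ)
    (hCPTP : IsCPTP E) (A : Matrix ι ι ℂ) : traceNorm (E A) ≤ traceNorm A := by
  obtain ⟨hC, hTP⟩ := hCPTP
  obtain ⟨L, Q, hALQ, hQh, hQQ, hLL⟩ := polar_factor A
  obtain ⟨W, hWtr, hWpsd⟩ := exists_dual_witness (E A)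
  set K := krausOp E hC with hKdef
  set P := (Matrix.posSemidef_conjTranspose_mul_self A).sqrt with hPdef
  have hPpsd : P.PosSemidef := (Matrix.posSemidef_conjTranspose_mul_self A).posSemidef_sqrt
  set t := traceNorm A with htdef
  have htnn : 0 ≤ t := traceNorm_nonneg A
  have htP : P.trace = (t : ℂ) := herm_trace_eq_re hPpsd.1
  -- the two vectors for Cauchy-Schwarz
  set x : EuclideanSpace ℂ ((ι × κ) × ι × κ) :=
    WithLp.toLp 2 (fun j : (ι × κ) × ι × κ => (Lᴴ * (K j.1)ᴴ * W) j.2.1 j.2.2) with hxdef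
  set y : EuclideanSpace ℂ ((ι × κ) × ι × κ) :=
    WithLp.toLp 2 (fun j : (ι × κ) × ι × κ => (Q * (K j.1)ᴴ) j.2.1 j.2.2) with hydef
  -- the inner product equals the trace pairing
  have hinner : (inner ℂ x y : ℂ) = ((traceNorm (E A) : ℝ) : ℂ) := by
    have h0 : (inner ℂ x y : ℂ) = ∑ j : (ι × κ) × ι × κ, star (x j) * y j := by
      rw [PiLp.inner_apply]
      exact Finset.sum_congr rfl fun j _ => RCLike.inner_apply' _ _
    have h1 : ∀ r : ι × κ, (Lᴴ * (K r)ᴴ * W)ᴴ * (Q * (K r)ᴴ)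
        = Wᴴ * (K r * A * (K r)ᴴ) := by
      intro r
      rw [hALQ]
      simp only [conjTranspose_mul, conjTranspose_conjTranspose, Matrix.mul_assoc]
    have h2 : (inner ℂ x y : ℂ) = ∑ r : ι × κ, (Wᴴ * (K r * A * (K r)ᴴ)).trace := by
      rw [h0, Fintype.sum_prod_type]
      refine Finset.sum_congr rfl fun r _ => ?_
      rw [← h1 r, trace_conjTranspose_mul, Fintype.sum_prod_type]
    have h3 : ∑ r : ι × κ, (Wᴴ * (K r * A * (K r)ᴴ)).trace = (Wᴴ * E A).trace := by
      rw [← Matrix.trace_sum, ← Finset.mul_sum, ← kraus_apply E hC A]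
    rw [h2, h3, hWtr]
    exact herm_trace_eq_re
      (Matrix.posSemidef_conjTranspose_mul_self (E A)).posSemidef_sqrt.1
  -- second factor: exactly t
  have hy2 : (∑ j : (ι × κ) × ι × κ, ‖y j‖ ^ 2 : ℝ) = t := by
    have h1 : ∀ r : ι × κ, (Q * (K r)ᴴ)ᴴ * (Q * (K r)ᴴ) = K r * P * (K r)ᴴ := by
      intro r
      rw [← hQQ, conjTranspose_mul, conjTranspose_conjTranspose, hQh]
      simp only [Matrix.mul_assoc]
    have h2 : ((∑ j : (ι × κ) × ι × κ, ‖y j‖ ^ 2 : ℝ) : ℂ) = (t : ℂ) := by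
      have e1 : ((∑ j : (ι × κ) × ι × κ, ‖y j‖ ^ 2 : ℝ) : ℂ)
          = ∑ r : ι × κ, ((Q * (K r)ᴴ)ᴴ * (Q * (K r)ᴴ)).trace := by
        rw [Fintype.sum_prod_type]
        push_cast
        refine Finset.sum_congr rfl fun r _ => ?_
        rw [trace_eq_ofReal_sum]
        push_cast
        rw [Fintype.sum_prod_type]
      rw [e1]
      have e2 : ∑ r : ι × κ, ((Q * (K r)ᴴ)ᴴ * (Q * (K r)ᴴ)).trace = (E P).trace := by
        rw [Finset.sum_congr rfl fun r _ => congrArg Matrix.trace (h1 r)]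
        rw [← Matrix.trace_sum, ← kraus_apply E hC P]
      rw [e2, hTP, htP]
    exact_mod_cast h2
  -- first factor: at most t
  have hx2 : (∑ j : (ι × κ) × ι × κ, ‖x j‖ ^ 2 : ℝ) ≤ t := by
    have h1 : ∀ r : ι × κ, (Lᴴ * (K r)ᴴ * W)ᴴ * (Lᴴ * (K r)ᴴ * W)
        = Wᴴ * (K r * (L * Lᴴ) * (K r)ᴴ) * W := by
      intro r
      simp only [conjTranspose_mul, conjTranspose_conjTranspose, Matrix.mul_assoc]
    set T := E (L * Lᴴ) with hTdef
    have hTpsd : T.PosSemidef :=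
      kraus_psd E hC (Matrix.posSemidef_self_mul_conjTranspose L)
    have e1 : ((∑ j : (ι × κ) × ι × κ, ‖x j‖ ^ 2 : ℝ) : ℂ)
        = ((W * Wᴴ) * T).trace := by
      have e0 : ((∑ j : (ι × κ) × ι × κ, ‖x j‖ ^ 2 : ℝ) : ℂ)
          = ∑ r : ι × κ, (Wᴴ * (K r * (L * Lᴴ) * (K r)ᴴ) * W).trace := by
        rw [Fintype.sum_prod_type]
        push_cast
        refine Finset.sum_congr rfl fun r _ => ?_
        rw [← h1 r, trace_eq_ofReal_sum]
        push_cast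
        rw [Fintype.sum_prod_type]
      rw [e0]
      have e2 : ∀ r : ι × κ, (Wᴴ * (K r * (L * Lᴴ) * (K r)ᴴ) * W).trace
          = ((W * Wᴴ) * (K r * (L * Lᴴ) * (K r)ᴴ)).trace := by
        intro r
        rw [Matrix.trace_mul_cycle]
      rw [Finset.sum_congr rfl fun r _ => e2 r, ← Matrix.trace_sum, ← Finset.mul_sum,
        ← kraus_apply E hC (L * Lᴴ), ← hTdef]
    have e3 : ((W * Wᴴ) * T).trace.re ≤ T.trace.re := by
      have h0 := psd_mul_psd_trace_re_nonneg hWpsd hTpsd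
      have hsplit : ((1 - W * Wᴴ) * T).trace = T.trace - ((W * Wᴴ) * T).trace := by
        rw [sub_mul, one_mul, Matrix.trace_sub]
      rw [hsplit] at h0
      simp only [Complex.sub_re] at h0
      linarith
    have e4 : T.trace.re = t := by
      have : T.trace = P.trace := by
        rw [hTdef, hTP, Matrix.trace_mul_comm, hLL]
      rw [this, htP]
      exact Complex.ofReal_re t
    calc (∑ j : (ι × κ) × ι × κ, ‖x j‖ ^ 2 : ℝ)
        = (((∑ j : (ι × κ) × ι × κ, ‖x j‖ ^ 2 : ℝ) : ℂ)).re := (Complex.ofReal_re _).symm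
      _ = ((W * Wᴴ) * T).trace.re := by rw [e1]
      _ ≤ T.trace.re := e3
      _ = t := e4
  -- put it together
  have hxn : ‖x‖ ≤ Real.sqrt t := by
    rw [EuclideanSpace.norm_eq]
    exact Real.sqrt_le_sqrt hx2
  have hyn : ‖y‖ ≤ Real.sqrt t := by
    rw [EuclideanSpace.norm_eq]
    exact Real.sqrt_le_sqrt (le_of_eq hy2)
  have hcs : ‖(inner ℂ x y : ℂ)‖ ≤ ‖x‖ * ‖y‖ := norm_inner_le_norm x y
  calc traceNorm (E A) = ((inner ℂ x y : ℂ)).re := by rw [hinner]; exact (Complex.ofReal_re _).symm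
    _ ≤ ‖(inner ℂ x y : ℂ)‖ := Complex.re_le_norm _
    _ ≤ ‖x‖ * ‖y‖ := hcs
    _ ≤ Real.sqrt t * Real.sqrt t := by
        refine mul_le_mul hxn hyn (norm_nonneg y) (Real.sqrt_nonneg t)
    _ = t := Real.mul_self_sqrt htnn

end contraction


section covariance
variable {ι κ : Type*} [Fintype ι] [DecidableEq ι] [Fintype κ] [DecidableEq κ]

lemma urep_conjTranspose (c : ι → ℤ) (θ : ℝ) :
    (Urep c θ)ᴴ = Matrix.diagonal (fun i => Complex.exp (-(Complex.I * (c i : ℂ) * (θ : ℂ)))) := by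
  have hfix : (star fun i => Complex.exp (Complex.I * (c i : ℂ) * (θ : ℂ)))
      = fun i => Complex.exp (-(Complex.I * (c i : ℂ) * (θ : ℂ))) :=
    funext fun i => by
      show star (Complex.exp (Complex.I * (c i : ℂ) * (θ : ℂ))) = _
      rw [Complex.star_def, ← Complex.exp_conj]
      congr 1
      rw [_root_.map_mul, _root_.map_mul, Complex.conj_I, Complex.conj_ofReal, map_intCast]
      ring
  rw [Urep, Matrix.diagonal_conjTranspose, hfix]

lemma urep_conj (c : ι → ℤ) (θ : ℝ) (a b : ι) :
    Urep c θ * Matrix.single a b 1 * (Urep c θ)ᴴ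
      = Complex.exp (Complex.I * ((c a - c b : ℤ) : ℂ) * (θ : ℂ)) •
          Matrix.single a b (1 : ℂ) := by
  ext i j
  rw [urep_conjTranspose, Matrix.mul_diagonal, Urep, Matrix.diagonal_mul, Matrix.smul_apply,
    smul_eq_mul]
  by_cases h : a = i ∧ b = j
  · obtain ⟨rfl, rfl⟩ := h
    rw [Matrix.single_apply_same, mul_one, mul_one, ← Complex.exp_add]
    congr 1
    push_cast
    ring
  · have hz : Matrix.single a b (1 : ℂ) i j = 0 := by
      simp only [Matrix.single, Matrix.of_apply, if_neg h]
    rw [hz, mul_zero, zero_mul, mul_zero]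

lemma choi_mode_zero (c : ι → ℤ) (d : κ → ℤ) (E : Matrix ι ι ℂ →ₗ[ℂ] Matrix κ κ ℂ)
    (hcov : IsCovariant c d E) {a b : ι} {p q : κ}
    (h : ¬ ((d p - d q : ℤ) = c a - c b)) : choi E (a, p) (b, q) = 0 := by
  show E (Matrix.single a b 1) p q = 0
  by_contra hY0
  have key : ∀ θ : ℝ,
      Complex.exp (Complex.I * ((c a - c b : ℤ) : ℂ) * (θ : ℂ))
          * E (Matrix.single a b 1) p q
      = Complex.exp (Complex.I * ((d p - d q : ℤ) : ℂ) * (θ : ℂ))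
          * E (Matrix.single a b 1) p q := by
    intro θ
    have h1 := hcov θ (Matrix.single a b 1)
    rw [urep_conj, _root_.map_smul] at h1
    have h2 : (Complex.exp (Complex.I * ((c a - c b : ℤ) : ℂ) * (θ : ℂ)) •
        E (Matrix.single a b 1)) p q
        = (Urep d θ * E (Matrix.single a b 1) * (Urep d θ)ᴴ) p q := by
      rw [h1]
    rw [Matrix.smul_apply, smul_eq_mul, urep_conjTranspose, Matrix.mul_diagonal, Urep,
      Matrix.diagonal_mul] at h2
    rw [h2, mul_comm (Complex.exp _) (E (Matrix.single a b 1) p q), mul_assoc,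
      ← Complex.exp_add, mul_comm (E (Matrix.single a b 1) p q) _]
    congr 2
    push_cast
    ring
  have hne : ((c a - c b - (d p - d q) : ℤ) : ℝ) ≠ 0 :=
    Int.cast_ne_zero.mpr (by omega)
  set θ0 : ℝ := Real.pi / ((c a - c b - (d p - d q) : ℤ) : ℝ) with hθ0
  have hexp : Complex.exp (Complex.I * ((c a - c b : ℤ) : ℂ) * (θ0 : ℂ))
      = Complex.exp (Complex.I * ((d p - d q : ℤ) : ℂ) * (θ0 : ℂ)) :=
    mul_right_cancel₀ hY0 (key θ0)
  have hone : Complex.exp (Complex.I * ((c a - c b : ℤ) : ℂ) * (θ0 : ℂ)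
      - Complex.I * ((d p - d q : ℤ) : ℂ) * (θ0 : ℂ)) = 1 := by
    rw [Complex.exp_sub, hexp, div_self (Complex.exp_ne_zero _)]
  have harg : Complex.I * ((c a - c b : ℤ) : ℂ) * (θ0 : ℂ)
      - Complex.I * ((d p - d q : ℤ) : ℂ) * (θ0 : ℂ)
      = (Real.pi : ℂ) * Complex.I := by
    have h1 : Complex.I * ((c a - c b : ℤ) : ℂ) * (θ0 : ℂ)
        - Complex.I * ((d p - d q : ℤ) : ℂ) * (θ0 : ℂ)
        = Complex.I * (((c a - c b - (d p - d q) : ℤ) : ℝ) : ℂ) * (θ0 : ℂ) := by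
      push_cast
      ring
    rw [h1, hθ0, mul_assoc, ← Complex.ofReal_mul, mul_div_cancel₀ _ hne]
    ring
  rw [harg, Complex.exp_pi_mul_I] at hone
  norm_num at hone

lemma mode_commute (c : ι → ℤ) (d : κ → ℤ) (E : Matrix ι ι ℂ →ₗ[ℂ] Matrix κ κ ℂ)
    (hcov : IsCovariant c d E) (k : ℤ) (A : Matrix ι ι ℂ) :
    E (modeComp c k A) = modeComp d k (E A) := by
  ext p q
  rw [choi_entry]
  have hrhs : modeComp d k (E A) p q
      = if d p - d q = k then ∑ a, ∑ b, A a b * choi E (a, p) (b, q) else 0 := by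
    show (if d p - d q = k then E A p q else 0) = _
    rw [choi_entry]
  rw [hrhs]
  by_cases hk : d p - d q = k
  · rw [if_pos hk]
    refine Finset.sum_congr rfl fun a _ => Finset.sum_congr rfl fun b _ => ?_
    show (if c a - c b = k then A a b else 0) * choi E (a, p) (b, q) = _
    by_cases hab : c a - c b = k
    · rw [if_pos hab]
    · rw [choi_mode_zero c d E hcov (by omega), mul_zero, mul_zero]
  · rw [if_neg hk]
    refine Finset.sum_eq_zero fun a _ => Finset.sum_eq_zero fun b _ => ?_
    show (if c a - c b = k then A a b else 0) * choi E (a, p) (b, q) = 0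
    by_cases hab : c a - c b = k
    · rw [choi_mode_zero c d E hcov (by omega), mul_zero]
    · rw [if_neg hab, zero_mul]

end covariance

/-- for each k, `F_k(ρ) = ‖ρ^(k)‖₁` is a U(1)-asymmetry monotone:
if a U(1)-covariant channel maps ρ to σ then `‖σ^(k)‖₁ ≤ ‖ρ^(k)‖₁`. -/


theorem stmt_10 {ι κ : Type*} [Fintype ι] [DecidableEq ι] [Fintype κ] [DecidableEq κ]
    (c : ι → ℤ) (d : κ → ℤ)
    (E : Matrix ι ι ℂ →ₗ[ℂ] Matrix κ κ ℂ)
    (hCPTP : IsCPTP E) (hcov : IsCovariant c d E)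
    (ρ : Matrix ι ι ℂ) (hρ : IsDensity ρ)
    (σ : Matrix κ κ ℂ) (hσ : E ρ = σ) (k : ℤ) :
    traceNorm (modeComp d k σ) ≤ traceNorm (modeComp c k ρ) := by
  subst hσ
  rw [← mode_commute c d E hcov k ρ]
  exact traceNorm_CPTP_le E hCPTP (modeComp c k ρ)
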